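/- arXiv:1306.6436 — 8 statements merged into one kernel-verified Lean document; each statement's English description precedes it below -/
import Mathlib

section
/- If a graph G admits a graph derangement, then G admits a surjective graph derangement. -/
/-- If a graph admits a graph derangement, it admits a surjective graph derangement. -/
theorem surjective_derangement_of_derangement {V : Type*} (G : SimpleGraph V)
    (h : ∃ f : V → V, Function.Injective f ∧ ∀ v : V, G.Adj v (f v)) :
    ∃ f : V → V, Function.Bijective f ∧ ∀ v : V, G.Adj v (f v) := by
  classical
  obtain ⟨f, hinj, hadj⟩ := h
  -- N v = length of the maximal backward chain ending at v, plus one (0 if infinite)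
  set N : V → ℕ := fun v => if h : ∃ n, v ∉ Set.range f^[n] then Nat.find h else 0 with hNdef
  have hdown : ∀ (v : V) (m n : ℕ), m ≤ n → v ∈ Set.range f^[n] → v ∈ Set.range f^[m] := by
    intro v m n hmn hv
    induction n with
    | zero => exact Nat.le_zero.mp hmn ▸ hv
    | succ k ih =>
      rcases Nat.lt_or_ge m (k+1) with hlt | hge
      · obtain ⟨u, hu⟩ := hv
        exact ih (Nat.lt_succ_iff.mp hlt) ⟨f u, by rwa [← Function.iterate_succ_apply]⟩
      · simpa [Nat.le_antisymm hmn hge] using hv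
  have hiff : ∀ (v : V) (k : ℕ), v ∈ Set.range f^[k] ↔ (N v = 0 ∨ k < N v) := by
    intro v k
    by_cases h : ∃ n, v ∉ Set.range f^[n]
    · have hfind : N v = Nat.find h := dif_pos h
      have hne : N v ≠ 0 := by
        rw [hfind]
        intro h0
        have := Nat.find_spec h
        rw [h0] at this
        exact this ⟨v, rfl⟩
      constructor
      · intro hk
        rcases Nat.lt_or_ge k (N v) with hlt | hge
        · exact Or.inr hlt
        · exact absurd (hdown v (N v) k hge hk) (hfind ▸ Nat.find_spec h)
      · rintro (h0 | hlt)
        · exact absurd h0 hne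
        · have := Nat.find_min h (hfind ▸ hlt)
          simpa using this
    · have h0 : N v = 0 := dif_neg h
      push_neg at h
      exact ⟨fun _ => Or.inl h0, fun _ => h k⟩
  have key : ∀ (v : V) (k : ℕ), f v ∈ Set.range f^[k+1] ↔ v ∈ Set.range f^[k] := by
    intro v k
    constructor
    · rintro ⟨u, hu⟩
      rw [Function.iterate_succ_apply'] at hu
      exact ⟨u, hinj hu⟩
    · rintro ⟨u, hu⟩
      exact ⟨u, by rw [Function.iterate_succ_apply', hu]⟩
  have hchar : ∀ (w : V) (m : ℕ), m ≠ 0 → (∀ k < m, w ∈ Set.range f^[k]) →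
      w ∉ Set.range f^[m] → N w = m := by
    intro w m hm hmem hnot
    have h1 : ¬ (N w = 0 ∨ m < N w) := fun hh => hnot ((hiff w m).mpr hh)
    push_neg at h1
    obtain ⟨hne, hle⟩ := h1
    by_contra hne'
    have hlt : N w < m := lt_of_le_of_ne hle hne'
    have : w ∈ Set.range f^[N w] := hmem _ hlt
    rcases (hiff w (N w)).mp this with h0 | h0
    · exact hne h0
    · exact lt_irrefl _ h0
  have hNzero : ∀ v, N v = 0 → N (f v) = 0 := by
    intro v hv
    have hall : ∀ n, f v ∈ Set.range f^[n] := by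
      intro n
      cases n with
      | zero => exact ⟨f v, rfl⟩
      | succ k => exact (key v k).mpr ((hiff v k).mpr (Or.inl hv))
    rcases (hiff (f v) (N (f v))).mp (hall _) with h0 | h0
    · exact h0
    · exact absurd h0 (lt_irrefl _)
  have hNsucc : ∀ v, N v ≠ 0 → N (f v) = N v + 1 := by
    intro v hv
    refine hchar (f v) (N v + 1) (Nat.succ_ne_zero _) ?_ ?_
    · intro k hk
      cases k with
      | zero => exact ⟨f v, rfl⟩
      | succ j =>
        exact (key v j).mpr ((hiff v j).mpr (Or.inr (Nat.lt_of_succ_lt_succ hk)))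
    · intro hc
      have : v ∈ Set.range f^[N v] := (key v (N v)).mp hc
      rcases (hiff v (N v)).mp this with h0 | h0
      · exact hv h0
      · exact lt_irrefl _ h0
  -- the preimage function
  set pre : V → V := fun v => if h : ∃ w, f w = v then h.choose else v with hpredef
  have hpre : ∀ (v : V), (∃ w, f w = v) → f (pre v) = v := by
    intro v hv
    simp only [hpredef, dif_pos hv]
    exact hv.choose_spec
  have hpref : ∀ v, pre (f v) = v := by
    intro v
    exact hinj (hpre (f v) ⟨v, rfl⟩)
  have hrange : ∀ v, 1 < N v ∨ N v = 0 → ∃ w, f w = v := by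
    intro v hv
    have : v ∈ Set.range f^[1] := (hiff v 1).mpr (Or.elim hv Or.inr Or.inl)
    simpa using this
  have hfpre : ∀ v, (1 < N v ∨ N v = 0) → f (pre v) = v := fun v hv => hpre v (hrange v hv)
  have hNpre1 : ∀ v, 1 < N v → N (pre v) + 1 = N v := by
    intro v h2
    obtain ⟨w, hw⟩ := hrange v (Or.inl h2)
    have hwp : pre v = w := by rw [← hw, hpref]
    rw [hwp]
    by_cases hNw : N w = 0
    · have h := hNzero w hNw
      rw [hw] at h
      omega
    · have h := hNsucc w hNw
      rw [hw] at h
      omega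
  have hNpre0 : ∀ v, N v = 0 → N (pre v) = 0 := by
    intro v h0
    obtain ⟨w, hw⟩ := hrange v (Or.inr h0)
    have hwp : pre v = w := by rw [← hw, hpref]
    rw [hwp]
    by_contra hNw
    have h := hNsucc w hNw
    rw [hw] at h
    omega
  set g : V → V := fun v => if Even (N v) ∧ N v ≠ 0 then pre v else f v with hgdef
  set g' : V → V := fun v => if N v = 0 then pre v else g v with hg'def
  have hgpos : ∀ v, Even (N v) → N v ≠ 0 → g v = pre v := by
    intro v h1 h2; simp [hgdef, h1, h2]
  have hgneg : ∀ v, ¬ Even (N v) → g v = f v := by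
    intro v h1; simp [hgdef, h1]
  have hg0 : ∀ v, N v = 0 → g v = f v := by
    intro v h1; simp [hgdef, h1]
  have hg'0 : ∀ v, N v = 0 → g' v = pre v := by
    intro v h1; simp [hg'def, h1]
  have hg'pos : ∀ v, N v ≠ 0 → g' v = g v := by
    intro v h1; simp [hg'def, h1]
  have h2of : ∀ v, Even (N v) → N v ≠ 0 → 1 < N v := by
    intro v h1 h2
    have := Nat.even_iff.mp h1
    omega
  -- adjacency
  have hgadj : ∀ v, G.Adj v (g v) := by
    intro v
    by_cases hc : Even (N v) ∧ N v ≠ 0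
    · rw [hgpos v hc.1 hc.2]
      have h2 := h2of v hc.1 hc.2
      have := hadj (pre v)
      rw [hfpre v (Or.inl h2)] at this
      exact this.symm
    · rcases not_and_or.mp hc with h1 | h1
      · rw [hgneg v h1]; exact hadj v
      · rw [hg0 v (not_not.mp h1)]; exact hadj v
  -- involution-style computations
  have hleft : ∀ v, g' (g v) = v := by
    intro v
    by_cases h0 : N v = 0
    · rw [hg0 v h0, hg'0 _ (hNzero v h0), hpref]
    · by_cases he : Even (N v)
      · have h2 := h2of v he h0
        rw [hgpos v he h0]
        have hN1 := hNpre1 v h2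
        have hNp0 : N (pre v) ≠ 0 := by
          have := Nat.even_iff.mp he; omega
        have hNodd : ¬ Even (N (pre v)) := by
          rw [Nat.even_iff] at *
          omega
        rw [hg'pos _ hNp0, hgneg _ hNodd, hfpre v (Or.inl h2)]
      · rw [hgneg v he]
        have hNf : N (f v) = N v + 1 := hNsucc v h0
        have hNfne : N (f v) ≠ 0 := by omega
        have hNfe : Even (N (f v)) := by
          rw [Nat.even_iff] at *
          omega
        rw [hg'pos _ hNfne, hgpos _ hNfe hNfne, hpref]
  have hright : ∀ v, g (g' v) = v := by
    intro v
    by_cases h0 : N v = 0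
    · rw [hg'0 v h0, hg0 _ (hNpre0 v h0), hfpre v (Or.inr h0)]
    · rw [hg'pos v h0]
      by_cases he : Even (N v)
      · have h2 := h2of v he h0
        rw [hgpos v he h0]
        have hN1 := hNpre1 v h2
        have hNodd : ¬ Even (N (pre v)) := by
          rw [Nat.even_iff] at *
          omega
        rw [hgneg _ hNodd, hfpre v (Or.inl h2)]
      · rw [hgneg v he]
        have hNf : N (f v) = N v + 1 := hNsucc v h0
        have hNfne : N (f v) ≠ 0 := by omega
        have hNfe : Even (N (f v)) := by
          rw [Nat.even_iff] at *
          omega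
        rw [hgpos _ hNfe hNfne, hpref]
  exact ⟨g, Function.bijective_iff_has_inverse.mpr ⟨g', hleft, hright⟩, hgadj⟩
end

section
/- (Halls' theorem, infinite marriage form) Let G = (V1, V2, E) be a bipartitioned graph in which every vertex of V1 has finite degree. Then there exists an injection ι: V1 → V2 with x adjacent to ι(x) for all x ∈ V1 if and only if for every finite subset X ⊆ V1, #X ≤ #N(X). -/
/-- Halls' theorem, infinite marriage form: for a bipartitioned graph in which every
vertex of `V₁` has finitely many neighbors, a semiperfect matching exists iff the
Hall condition holds for all finite subsets of `V₁`. -/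
theorem hall_marriage_infinite {V₁ V₂ : Type*} (r : V₁ → V₂ → Prop)
    (hlf : ∀ x : V₁, Set.Finite {y : V₂ | r x y}) :
    (∃ ι : V₁ → V₂, Function.Injective ι ∧ ∀ x : V₁, r x (ι x)) ↔
      ∀ X : Finset V₁, X.card ≤ Set.ncard {y : V₂ | ∃ x ∈ X, r x y} := by
  classical
  let t : V₁ → Finset V₂ := fun x => (hlf x).toFinset
  have hset : ∀ X : Finset V₁, {y : V₂ | ∃ x ∈ X, r x y} = ↑(X.biUnion t) := by
    intro X
    ext y
    simp [t, Set.Finite.mem_toFinset]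
  have hcard : ∀ X : Finset V₁, Set.ncard {y : V₂ | ∃ x ∈ X, r x y} = (X.biUnion t).card := by
    intro X
    rw [hset X, Set.ncard_coe_finset]
  have key := Finset.all_card_le_biUnion_card_iff_exists_injective t
  constructor
  · rintro ⟨f, hf, hrf⟩ X
    rw [hcard]
    exact (key.mpr ⟨f, hf, fun x => by simp [t, Set.Finite.mem_toFinset, hrf x]⟩) X
  · intro h
    obtain ⟨f, hf, hrf⟩ := key.mp (fun X => by rw [← hcard]; exact h X)
    exact ⟨f, hf, fun x => by simpa [t, Set.Finite.mem_toFinset] using hrf x⟩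
end

section
/- Let G be a locally finite graph. If for every finite subset X of vertices #X ≤ #N(X), then G admits a graph derangement. -/
/-- If `G` is locally finite and the Hall condition holds for all finite vertex subsets,
then `G` admits a graph derangement. -/
theorem derangement_of_hall_condition {V : Type*} (G : SimpleGraph V)
    (hlf : ∀ v : V, Set.Finite (G.neighborSet v))
    (hhall : ∀ X : Finset V, X.card ≤ Set.ncard {y : V | ∃ x ∈ X, G.Adj x y}) :
    ∃ f : V → V, Function.Injective f ∧ ∀ v : V, G.Adj v (f v) := by
  classical
  set t : V → Finset V := fun v => (hlf v).toFinset with ht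
  have key : ∀ s : Finset V, s.card ≤ (s.biUnion t).card := by
    intro s
    have hset : {y : V | ∃ x ∈ s, G.Adj x y} = ↑(s.biUnion t) := by
      ext y
      simp [ht, SimpleGraph.mem_neighborSet]
    have := hhall s
    rwa [hset, Set.ncard_coe_finset] at this
  obtain ⟨f, hinj, hf⟩ := (Finset.all_card_le_biUnion_card_iff_exists_injective t).mp key
  exact ⟨f, hinj, fun v => by simpa [ht, SimpleGraph.mem_neighborSet] using hf v⟩
end

section
/- Let G be a locally finite graph and suppose there is a finite subset X of vertices with #X > #N(X). Then there is an independent subset Y ⊆ X with #Y > #N(Y). -/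
/-- If a locally finite graph has a finite set `X` with `#X > #N(X)`, then it has an
independent subset `Y ⊆ X` with `#Y > #N(Y)`. -/
theorem independent_hall_violator {V : Type*} (G : SimpleGraph V)
    (hlf : ∀ v : V, Set.Finite (G.neighborSet v))
    (X : Finset V) (hX : Set.ncard {y : V | ∃ x ∈ X, G.Adj x y} < X.card) :
    ∃ Y : Finset V, Y ⊆ X ∧ (∀ x ∈ Y, ∀ y ∈ Y, ¬ G.Adj x y) ∧
      Set.ncard {y : V | ∃ x ∈ Y, G.Adj x y} < Y.card := by
  classical
  set A : Finset V := X.filter (fun x => ∃ z ∈ X, G.Adj x z) with hAdef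
  set Y : Finset V := X \ A with hYdef
  have hAX : A ⊆ X := Finset.filter_subset _ _
  refine ⟨Y, Finset.sdiff_subset, ?_, ?_⟩
  · intro x hx y hy hadj
    have hxX : x ∈ X := (Finset.mem_sdiff.mp hx).1
    have hyX : y ∈ X := (Finset.mem_sdiff.mp hy).1
    exact (Finset.mem_sdiff.mp hx).2 (Finset.mem_filter.mpr ⟨hxX, y, hyX, hadj⟩)
  · -- finiteness of N(X)
    have hNXfin : ({y : V | ∃ x ∈ X, G.Adj x y}).Finite := by
      have : {y : V | ∃ x ∈ X, G.Adj x y} = ⋃ x ∈ (X : Set V), G.neighborSet x := by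
        ext y; simp [SimpleGraph.neighborSet]
      rw [this]
      exact Set.Finite.biUnion (X.finite_toSet) (fun x _ => hlf x)
    -- A ⊆ N(X)
    have hA_sub : (A : Set V) ⊆ {y : V | ∃ x ∈ X, G.Adj x y} := by
      intro x hx
      simp only [Finset.coe_filter, Set.mem_setOf_eq, hAdef] at hx
      obtain ⟨_, z, hz, hadj⟩ := hx
      exact ⟨z, hz, hadj.symm⟩
    -- N(Y) ⊆ N(X) \ A
    have hNY_sub : {y : V | ∃ x ∈ Y, G.Adj x y} ⊆ {y : V | ∃ x ∈ X, G.Adj x y} \ (A : Set V) := by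
      rintro y ⟨x, hx, hadj⟩
      have hxmem := Finset.mem_sdiff.mp hx
      refine ⟨⟨x, hxmem.1, hadj⟩, ?_⟩
      intro hyA
      have hyX : y ∈ X := hAX hyA
      exact hxmem.2 (Finset.mem_filter.mpr ⟨hxmem.1, y, hyX, hadj⟩)
    have hdiff : ({y : V | ∃ x ∈ X, G.Adj x y} \ (A : Set V)).ncard
        = ({y : V | ∃ x ∈ X, G.Adj x y}).ncard - A.card := by
      rw [Set.ncard_diff hA_sub (A.finite_toSet), Set.ncard_coe_finset]
    have h1 : ({y : V | ∃ x ∈ Y, G.Adj x y}).ncard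
        ≤ ({y : V | ∃ x ∈ X, G.Adj x y}).ncard - A.card := by
      rw [← hdiff]
      exact Set.ncard_le_ncard hNY_sub hNXfin.diff
    have hAle : A.card ≤ ({y : V | ∃ x ∈ X, G.Adj x y}).ncard := by
      have := Set.ncard_le_ncard hA_sub hNXfin
      rwa [Set.ncard_coe_finset] at this
    have hYcard : Y.card = X.card - A.card := Finset.card_sdiff_of_subset hAX
    have hAX' : A.card ≤ X.card := Finset.card_le_card hAX
    omega
end

section
/- (First Existence Theorem, Tutte 1953) A locally finite graph G admits a surjective graph derangement if and only if for every finite independent set X of vertices, #X ≤ #N(X). -/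
open Function Set

private theorem csb_pointwise {α β : Type*} {f : α → β} {g : β → α}
    (hf : Function.Injective f) (hg : Function.Injective g) :
    ∃ h : α → β, Function.Bijective h ∧ ∀ a, h a = f a ∨ g (h a) = a := by
  classical
  let F : Set α →o Set α :=
    ⟨fun S => (g '' (f '' S)ᶜ)ᶜ, by
      intro S T hST
      exact compl_subset_compl.2 (image_mono (compl_subset_compl.2 (image_mono hST)))⟩
  set S := OrderHom.lfp F with hSdef
  have hS : (g '' (f '' S)ᶜ)ᶜ = S := OrderHom.map_lfp F
  have hmem : ∀ a, a ∉ S → ∃ b, b ∉ f '' S ∧ g b = a := by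
    intro a ha
    have : a ∈ g '' (f '' S)ᶜ := by
      by_contra hc
      exact ha (hS ▸ hc)
    obtain ⟨b, hb, hba⟩ := this
    exact ⟨b, hb, hba⟩
  let h : α → β := fun a => if ha : a ∈ S then f a else (hmem a ha).choose
  have hspec : ∀ a (ha : a ∉ S), (hmem a ha).choose ∉ f '' S ∧ g ((hmem a ha).choose) = a :=
    fun a ha => (hmem a ha).choose_spec
  refine ⟨h, ⟨?_, ?_⟩, ?_⟩
  · intro a₁ a₂ hh
    by_cases h1 : a₁ ∈ S <;> by_cases h2 : a₂ ∈ S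
    · simp only [h, dif_pos h1, dif_pos h2] at hh; exact hf hh
    · simp only [h, dif_pos h1, dif_neg h2] at hh
      exact absurd (hh ▸ mem_image_of_mem f h1) (hspec a₂ h2).1
    · simp only [h, dif_neg h1, dif_pos h2] at hh
      exact absurd (hh ▸ mem_image_of_mem f h2) ((hspec a₁ h1).1 ∘ Eq.mp (by rw [hh]))
    · simp only [h, dif_neg h1, dif_neg h2] at hh
      rw [← (hspec a₁ h1).2, ← (hspec a₂ h2).2, hh]
  · intro b
    by_cases hb : b ∈ f '' S
    · obtain ⟨a, haS, rfl⟩ := hb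
      exact ⟨a, by simp [h, dif_pos haS]⟩
    · have hgb : g b ∉ S := by
        rw [← hS]
        simp only [mem_compl_iff, not_not]
        exact mem_image_of_mem g hb
      refine ⟨g b, ?_⟩
      have h1 : h (g b) = (hmem (g b) hgb).choose := dif_neg hgb
      rw [h1]
      exact hg (hspec (g b) hgb).2
  · intro a
    by_cases ha : a ∈ S
    · left; simp [h, dif_pos ha]
    · right; simp only [h, dif_neg ha]; exact (hspec a ha).2

/-- First Existence Theorem (Tutte, 1953): a locally finite graph admits a surjective
graph derangement iff every finite independent set `X` satisfies `#X ≤ #N(X)`. -/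
theorem first_existence_theorem {V : Type*} (G : SimpleGraph V)
    (hlf : ∀ v : V, Set.Finite (G.neighborSet v)) :
    (∃ f : V → V, Function.Bijective f ∧ ∀ v : V, G.Adj v (f v)) ↔
      ∀ X : Finset V, (∀ x ∈ X, ∀ y ∈ X, ¬ G.Adj x y) →
        X.card ≤ Set.ncard {y : V | ∃ x ∈ X, G.Adj x y} := by
  classical
  constructor
  · rintro ⟨f, hbij, hadj⟩ X _
    have hfin : ({y : V | ∃ x ∈ X, G.Adj x y}).Finite := by
      have : {y : V | ∃ x ∈ X, G.Adj x y} = ⋃ x ∈ X, G.neighborSet x := by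
        ext y; simp [SimpleGraph.mem_neighborSet]
      rw [this]
      exact Set.Finite.biUnion X.finite_toSet (fun x _ => hlf x)
    calc X.card = (X.image f).card := (Finset.card_image_of_injective X hbij.1).symm
      _ = (↑(X.image f) : Set V).ncard := (Set.ncard_coe_finset _).symm
      _ ≤ ({y : V | ∃ x ∈ X, G.Adj x y}).ncard := by
          apply Set.ncard_le_ncard _ hfin
          intro y hy
          simp only [Finset.coe_image, Set.mem_image, Finset.mem_coe] at hy
          obtain ⟨x, hx, rfl⟩ := hy
          exact ⟨x, hx, hadj x⟩
  · intro hHall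
    set t : V → Finset V := fun v => (hlf v).toFinset with ht
    have htmem : ∀ v y, y ∈ t v ↔ G.Adj v y := by
      intro v y; simp [ht, SimpleGraph.mem_neighborSet]
    -- general Hall condition
    have hGen : ∀ s : Finset V, s.card ≤ (s.biUnion t).card := by
      intro s
      set B : Finset V := s.filter (fun x => x ∉ s.biUnion t) with hB
      have hBind : ∀ x ∈ B, ∀ y ∈ B, ¬ G.Adj x y := by
        intro x hx y hy hadj
        rw [hB, Finset.mem_filter] at hx hy
        exact hx.2 (Finset.mem_biUnion.2 ⟨y, hy.1, (htmem y x).2 hadj.symm⟩)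
      have hBcard : B.card ≤ (B.biUnion t).card := by
        have := hHall B hBind
        have hcoe : {y : V | ∃ x ∈ B, G.Adj x y} = ↑(B.biUnion t) := by
          ext y
          simp only [Set.mem_setOf_eq, Finset.coe_biUnion, Set.mem_iUnion, Finset.mem_coe]
          constructor
          · rintro ⟨x, hx, h⟩; exact ⟨x, hx, (htmem x y).2 h⟩
          · rintro ⟨x, hx, h⟩; exact ⟨x, hx, (htmem x y).1 h⟩
        rw [hcoe, Set.ncard_coe_finset] at this
        exact this
      -- (s \ B) ∪ B.biUnion t ⊆ s.biUnion t, disjoint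
      have hsub1 : s \ B ⊆ s.biUnion t := by
        intro x hx
        rw [Finset.mem_sdiff] at hx
        by_contra hc
        exact hx.2 (Finset.mem_filter.2 ⟨hx.1, hc⟩)
      have hsub2 : B.biUnion t ⊆ s.biUnion t := by
        apply Finset.biUnion_subset_biUnion_of_subset_left
        exact Finset.filter_subset _ _
      have hdisj : Disjoint (s \ B) (B.biUnion t) := by
        rw [Finset.disjoint_left]
        intro x hx hxB
        rw [Finset.mem_sdiff] at hx
        obtain ⟨b, hb, hbt⟩ := Finset.mem_biUnion.1 hxB
        have hbB := hb
        rw [hB, Finset.mem_filter] at hbB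
        -- b ∈ B, adj b x, x ∈ s ⇒ b ∈ s.biUnion t
        exact hbB.2 (Finset.mem_biUnion.2 ⟨x, hx.1, (htmem x b).2 ((htmem b x).1 hbt).symm⟩)
      have hunion : (s \ B) ∪ B.biUnion t ⊆ s.biUnion t := Finset.union_subset hsub1 hsub2
      have hcards : (s \ B).card + (B.biUnion t).card ≤ (s.biUnion t).card := by
        rw [← Finset.card_union_of_disjoint hdisj]
        exact Finset.card_le_card hunion
      have hBsub : B ⊆ s := Finset.filter_subset _ _
      have hsB := Finset.card_sdiff_add_card_eq_card hBsub
      omega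
    obtain ⟨f, hfinj, hft⟩ := (Finset.all_card_le_biUnion_card_iff_exists_injective t).1 hGen
    obtain ⟨h, hbij, hcase⟩ := csb_pointwise hfinj hfinj
    refine ⟨h, hbij, ?_⟩
    intro v
    rcases hcase v with hc | hc
    · rw [hc]; exact (htmem v (f v)).1 (hft v)
    · have : G.Adj (h v) (f (h v)) := (htmem (h v) (f (h v))).1 (hft (h v))
      rw [hc] at this
      exact this.symm
end

section
/- (König/Cantor–Bernstein for matchings) Let G = (V1, V2, E) be a bipartitioned graph (not necessarily locally finite). If there exist injections ι1: V1 → V2 and ι2: V2 → V1 with x ~ ι1(x) for all x ∈ V1 and y ~ ι2(y) for all y ∈ V2, then there exists a bijection f: V1 → V2 with x ~ f(x) for all x ∈ V1. -/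
/-- König/Cantor–Bernstein for matchings: if a bipartitioned graph admits
semiderangements in both directions, it admits a perfect matching. -/
theorem konig_cantor_bernstein_matching {V₁ V₂ : Type*} (r : V₁ → V₂ → Prop)
    (ι₁ : V₁ → V₂) (h₁ : Function.Injective ι₁) (hr₁ : ∀ x : V₁, r x (ι₁ x))
    (ι₂ : V₂ → V₁) (h₂ : Function.Injective ι₂) (hr₂ : ∀ y : V₂, r (ι₂ y) y) :
    ∃ f : V₁ → V₂, Function.Bijective f ∧ ∀ x : V₁, r x (f x) := by
  classical
  set g : V₁ → V₁ := ι₂ ∘ ι₁ with hg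
  set C : Set V₁ := ⋃ n, g^[n] '' (Set.range ι₂)ᶜ with hC
  have hgC : ∀ x ∈ C, g x ∈ C := by
    intro x hx
    obtain ⟨n, z, hz, rfl⟩ := by
      simpa only [hC, Set.mem_iUnion, Set.mem_image] using hx
    exact Set.mem_iUnion.2 ⟨n + 1, z, hz, by rw [Function.iterate_succ_apply']⟩
  have hcompl : ∀ x, x ∉ C → x ∈ Set.range ι₂ := by
    intro x hx
    by_contra hxr
    exact hx (Set.mem_iUnion.2 ⟨0, x, hxr, rfl⟩)
  have hinv : ∀ (x : V₁) (hx : x ∉ C), ι₂ (hcompl x hx).choose = x := fun x hx =>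
    (hcompl x hx).choose_spec
  refine ⟨fun x => if h : x ∈ C then ι₁ x else (hcompl x h).choose, ⟨?_, ?_⟩, ?_⟩
  · intro a b hab
    by_cases ha : a ∈ C <;> by_cases hb : b ∈ C <;>
      simp only [ha, hb, dif_pos, dif_neg, not_false_iff] at hab
    · exact h₁ hab
    · exfalso
      apply hb
      have : b = g a := by
        rw [hg, Function.comp_apply, hab]; exact (hinv b hb).symm
      rw [this]; exact hgC a ha
    · exfalso
      apply ha
      have : a = g b := by
        rw [hg, Function.comp_apply, ← hab]; exact (hinv a ha).symm
      rw [this]; exact hgC b hb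
    · have := congrArg ι₂ hab
      rwa [hinv a ha, hinv b hb] at this
  · intro y
    by_cases hy : ι₂ y ∈ C
    · obtain ⟨n, z, hz, hzz⟩ := by
        simpa only [hC, Set.mem_iUnion, Set.mem_image] using hy
      cases n with
      | zero => exact absurd ⟨y, hzz.symm⟩ hz
      | succ m =>
        rw [Function.iterate_succ_apply'] at hzz
        have hmem : g^[m] z ∈ C := Set.mem_iUnion.2 ⟨m, z, hz, rfl⟩
        have hy' : ι₁ (g^[m] z) = y := h₂ hzz
        exact ⟨g^[m] z, by simp [hmem, hy']⟩
    · refine ⟨ι₂ y, ?_⟩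
      simp only [hy, dif_neg, not_false_iff]
      exact h₂ (hinv (ι₂ y) hy)
  · intro x
    by_cases hx : x ∈ C
    · simpa [hx] using hr₁ x
    · have := hr₂ (hcompl x hx).choose
      rw [hinv x hx] at this
      simpa [hx] using this
end

section
/- (Second Existence Theorem) For a locally finite bipartitioned graph G = (V1, V2, E), the following are equivalent: (i) G admits a perfect matching; (ii) G admits a graph derangement; (iii) for every finite subset J of V1 ∪ V2, #J ≤ #N(J). -/
open Set Function

/-- Strengthened Schröder–Bernstein: the bijection agrees pointwise with `f` or with `g⁻¹`. -/
theorem csb_strong {α β : Type*} {f : α → β} {g : β → α} (hf : Function.Injective f)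
    (hg : Function.Injective g) :
    ∃ F : α → β, Function.Bijective F ∧ ∀ a, F a = f a ∨ g (F a) = a := by
  classical
  cases' isEmpty_or_nonempty β with hβ hβ
  · have : IsEmpty α := Function.isEmpty f
    exact ⟨f, ⟨hf, fun b => (hβ.false b).elim⟩, fun a => (this.false a).elim⟩
  set F : Set α →o Set α :=
    { toFun := fun s => (g '' (f '' s)ᶜ)ᶜ
      monotone' := fun s t hst =>
        compl_subset_compl.mpr <| image_mono <| compl_subset_compl.mpr <| image_mono hst }
  set s : Set α := F.lfp
  have hs : (g '' (f '' s)ᶜ)ᶜ = s := F.map_lfp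
  have hns : g '' (f '' s)ᶜ = sᶜ := compl_injective (by simp [hs])
  set g' := invFun g
  have g'g : LeftInverse g' g := leftInverse_invFun hg
  have hg'ns : g' '' sᶜ = (f '' s)ᶜ := by rw [← hns, g'g.image_image]
  set h : α → β := s.piecewise f g'
  have hsurj : Surjective h := by rw [← range_eq_univ, range_piecewise, hg'ns, union_compl_self]
  have hinj : Injective h := by
    refine (injective_piecewise_iff _).2 ⟨hf.injOn, ?_, ?_⟩
    · intro x hx y hy hxy
      obtain ⟨x', _, rfl⟩ : x ∈ g '' (f '' s)ᶜ := by rwa [hns]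
      obtain ⟨y', _, rfl⟩ : y ∈ g '' (f '' s)ᶜ := by rwa [hns]
      rw [g'g _, g'g _] at hxy
      rw [hxy]
    · intro x hx y hy hxy
      obtain ⟨y', hy', rfl⟩ : y ∈ g '' (f '' s)ᶜ := by rwa [hns]
      rw [g'g _] at hxy
      exact (hy' ⟨x, hx, hxy⟩).elim
  refine ⟨h, ⟨hinj, hsurj⟩, fun a => ?_⟩
  by_cases ha : a ∈ s
  · exact Or.inl (Set.piecewise_eq_of_mem _ _ _ ha)
  · right
    obtain ⟨b, _, rfl⟩ : a ∈ g '' (f '' s)ᶜ := by rwa [hns]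
    rw [show h (g b) = g' (g b) from Set.piecewise_eq_of_notMem _ _ _ ha, g'g b]

/-- Second Existence Theorem: for a locally finite bipartitioned graph the existence of
a perfect matching, the existence of a graph derangement, and the Hall condition for
all finite subsets of the vertex set are equivalent. -/
theorem second_existence_theorem {V₁ V₂ : Type*} (r : V₁ → V₂ → Prop)
    (hlf₁ : ∀ x : V₁, Set.Finite {y : V₂ | r x y})
    (hlf₂ : ∀ y : V₂, Set.Finite {x : V₁ | r x y}) :
    letI G : SimpleGraph (V₁ ⊕ V₂) :=
      SimpleGraph.fromRel (fun a b => ∃ x y, a = Sum.inl x ∧ b = Sum.inr y ∧ r x y)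
    ((∃ f : V₁ → V₂, Function.Bijective f ∧ ∀ x : V₁, r x (f x)) ↔
        (∃ g : V₁ ⊕ V₂ → V₁ ⊕ V₂, Function.Injective g ∧ ∀ v, G.Adj v (g v))) ∧
    ((∃ g : V₁ ⊕ V₂ → V₁ ⊕ V₂, Function.Injective g ∧ ∀ v, G.Adj v (g v)) ↔
        ∀ J : Finset (V₁ ⊕ V₂), J.card ≤ Set.ncard {w : V₁ ⊕ V₂ | ∃ v ∈ J, G.Adj v w}) := by
  classical
  set G : SimpleGraph (V₁ ⊕ V₂) :=
    SimpleGraph.fromRel (fun a b => ∃ x y, a = Sum.inl x ∧ b = Sum.inr y ∧ r x y) with hG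
  -- Adjacency characterization
  have hadj : ∀ a b, G.Adj a b ↔
      (∃ x y, a = Sum.inl x ∧ b = Sum.inr y ∧ r x y) ∨
      (∃ x y, b = Sum.inl x ∧ a = Sum.inr y ∧ r x y) := by
    intro a b
    constructor
    · rintro ⟨-, h⟩; exact h
    · rintro (⟨x, y, rfl, rfl, hxy⟩ | ⟨x, y, rfl, rfl, hxy⟩)
      · exact ⟨by simp, Or.inl ⟨x, y, rfl, rfl, hxy⟩⟩
      · exact ⟨by simp, Or.inr ⟨x, y, rfl, rfl, hxy⟩⟩
  have hadj_lr : ∀ x y, G.Adj (Sum.inl x) (Sum.inr y) ↔ r x y := by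
    intro x y
    rw [hadj]
    constructor
    · rintro (⟨x', y', hx, hy, hr⟩ | ⟨x', y', hx, hy, hr⟩)
      · cases hx; cases hy; exact hr
      · exact absurd hx (by simp)
    · intro hr; exact Or.inl ⟨x, y, rfl, rfl, hr⟩
  have hadj_ll : ∀ x x', ¬ G.Adj (Sum.inl x) (Sum.inl x') := by
    intro x x' h
    rw [hadj] at h
    rcases h with ⟨_, _, _, h, _⟩ | ⟨_, _, _, h, _⟩ <;> simp at h
  have hadj_rr : ∀ y y', ¬ G.Adj (Sum.inr y) (Sum.inr y') := by
    intro y y' h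
    rw [hadj] at h
    rcases h with ⟨_, _, h, _, _⟩ | ⟨_, _, h, _, _⟩ <;> simp at h
  -- (i) → (ii)
  have hAB : (∃ f : V₁ → V₂, Function.Bijective f ∧ ∀ x : V₁, r x (f x)) →
      (∃ g : V₁ ⊕ V₂ → V₁ ⊕ V₂, Function.Injective g ∧ ∀ v, G.Adj v (g v)) := by
    rintro ⟨f, hfb, hfr⟩
    let e := Equiv.ofBijective f hfb
    refine ⟨Sum.elim (fun x => Sum.inr (f x)) (fun y => Sum.inl (e.symm y)), ?_, ?_⟩
    · rintro (x | y) (x' | y') h <;> simp_all only [Sum.elim_inl, Sum.elim_inr,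
        Sum.inr.injEq, Sum.inl.injEq, reduceCtorEq]
      · exact hfb.1 h
      · exact e.symm.injective h
    · rintro (x | y)
      · exact (hadj_lr x (f x)).mpr (hfr x)
      · have : r (e.symm y) y := by
          have := hfr (e.symm y)
          rwa [show f (e.symm y) = y from e.apply_symm_apply y] at this
        exact ((hadj_lr (e.symm y) y).mpr this).symm
  -- (ii) → (iii)
  have hBC : (∃ g : V₁ ⊕ V₂ → V₁ ⊕ V₂, Function.Injective g ∧ ∀ v, G.Adj v (g v)) →
      ∀ J : Finset (V₁ ⊕ V₂), J.card ≤ Set.ncard {w : V₁ ⊕ V₂ | ∃ v ∈ J, G.Adj v w} := by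
    rintro ⟨g, hgi, hga⟩ J
    have hfin : Set.Finite {w : V₁ ⊕ V₂ | ∃ v ∈ J, G.Adj v w} := by
      have : {w : V₁ ⊕ V₂ | ∃ v ∈ J, G.Adj v w} ⊆ ⋃ v ∈ J, {w | G.Adj v w} := by
        rintro w ⟨v, hv, h⟩; exact Set.mem_biUnion hv h
      refine Set.Finite.subset (Set.Finite.biUnion J.finite_toSet fun v _ => ?_) this
      rcases v with x | y
      · refine Set.Finite.subset (Set.Finite.image Sum.inr (hlf₁ x)) ?_
        rintro (x' | y') h
        · exact (hadj_ll x x' h).elim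
        · exact ⟨y', (hadj_lr x y').mp h, rfl⟩
      · refine Set.Finite.subset (Set.Finite.image Sum.inl (hlf₂ y)) ?_
        rintro (x' | y') h
        · exact ⟨x', (hadj_lr x' y).mp h.symm, rfl⟩
        · exact (hadj_rr y y' h).elim
    rw [Set.ncard_eq_toFinset_card _ hfin]
    refine Finset.card_le_card_of_injOn g ?_ ?_
    · intro v hv
      simp only [Finset.mem_coe, Set.Finite.mem_toFinset]
      exact ⟨v, hv, hga v⟩
    · exact fun a _ b _ h => hgi h
  -- (iii) → (i)
  have hCA : (∀ J : Finset (V₁ ⊕ V₂), J.card ≤ Set.ncard {w : V₁ ⊕ V₂ | ∃ v ∈ J, G.Adj v w}) →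
      (∃ f : V₁ → V₂, Function.Bijective f ∧ ∀ x : V₁, r x (f x)) := by
    intro hall
    -- Hall condition on V₁ side
    obtain ⟨f, hfi, hfr⟩ : ∃ f : V₁ → V₂, Function.Injective f ∧ ∀ x, r x (f x) := by
      have := (Finset.all_card_le_biUnion_card_iff_exists_injective
        (fun x : V₁ => (hlf₁ x).toFinset)).mp ?_
      · obtain ⟨f, hfi, hf⟩ := this
        exact ⟨f, hfi, fun x => by simpa using hf x⟩
      · intro s
        have h := hall (s.map ⟨Sum.inl, Sum.inl_injective⟩)
        rw [Finset.card_map] at h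
        refine h.trans ?_
        have heq : {w : V₁ ⊕ V₂ | ∃ v ∈ s.map ⟨Sum.inl, Sum.inl_injective⟩, G.Adj v w} =
            Sum.inr '' ↑(s.biUnion fun x => (hlf₁ x).toFinset) := by
          ext w
          constructor
          · rintro ⟨v, hv, hadjv⟩
            obtain ⟨x, hx, rfl⟩ := Finset.mem_map.mp hv
            rcases w with x' | y'
            · exact (hadj_ll x x' hadjv).elim
            · refine ⟨y', ?_, rfl⟩
              simp only [Finset.mem_coe, Finset.mem_biUnion, Set.Finite.mem_toFinset]
              exact ⟨x, hx, by simpa using (hadj_lr x y').mp hadjv⟩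
          · rintro ⟨y, hy, rfl⟩
            simp only [Finset.mem_coe, Finset.mem_biUnion, Set.Finite.mem_toFinset] at hy
            obtain ⟨x, hx, hr⟩ := hy
            exact ⟨Sum.inl x, Finset.mem_map_of_mem _ hx, (hadj_lr x y).mpr (by simpa using hr)⟩
        rw [heq, Set.ncard_image_of_injective _ Sum.inr_injective, Set.ncard_coe_finset]
    -- Hall condition on V₂ side
    obtain ⟨g, hgi, hgr⟩ : ∃ g : V₂ → V₁, Function.Injective g ∧ ∀ y, r (g y) y := by
      have := (Finset.all_card_le_biUnion_card_iff_exists_injective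
        (fun y : V₂ => (hlf₂ y).toFinset)).mp ?_
      · obtain ⟨g, hgi, hg⟩ := this
        exact ⟨g, hgi, fun y => by simpa using hg y⟩
      · intro s
        have h := hall (s.map ⟨Sum.inr, Sum.inr_injective⟩)
        rw [Finset.card_map] at h
        refine h.trans ?_
        have heq : {w : V₁ ⊕ V₂ | ∃ v ∈ s.map ⟨Sum.inr, Sum.inr_injective⟩, G.Adj v w} =
            Sum.inl '' ↑(s.biUnion fun y => (hlf₂ y).toFinset) := by
          ext w
          constructor
          · rintro ⟨v, hv, hadjv⟩
            obtain ⟨y, hy, rfl⟩ := Finset.mem_map.mp hv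
            rcases w with x' | y'
            · refine ⟨x', ?_, rfl⟩
              simp only [Finset.mem_coe, Finset.mem_biUnion, Set.Finite.mem_toFinset]
              exact ⟨y, hy, by simpa using (hadj_lr x' y).mp hadjv.symm⟩
            · exact (hadj_rr y y' hadjv).elim
          · rintro ⟨x, hx, rfl⟩
            simp only [Finset.mem_coe, Finset.mem_biUnion, Set.Finite.mem_toFinset] at hx
            obtain ⟨y, hy, hr⟩ := hx
            exact ⟨Sum.inr y, Finset.mem_map_of_mem _ hy,
              ((hadj_lr x y).mpr (by simpa using hr)).symm⟩
        rw [heq, Set.ncard_image_of_injective _ Sum.inl_injective, Set.ncard_coe_finset]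
    obtain ⟨F, hFb, hF⟩ := csb_strong hfi hgi
    refine ⟨F, hFb, fun x => ?_⟩
    rcases hF x with h | h
    · rw [h]; exact hfr x
    · have := hgr (F x)
      rwa [h] at this
  exact ⟨⟨hAB, fun h => hCA (hBC h)⟩, ⟨hBC, fun h => hAB (hCA h)⟩⟩
end

section
/- The checkerboard graph R_{m,n} admits a graph derangement if and only if at least one of m and n is even. -/
lemma odd_of_abs_add_abs (x y : ℤ) (h : |x| + |y| = 1) : Odd (x + y) := by
  rcases abs_cases x with ⟨hx, _⟩ | ⟨hx, _⟩ <;> rcases abs_cases y with ⟨hy, _⟩ | ⟨hy, _⟩ <;>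
    rw [hx, hy] at h <;> rw [Int.odd_iff] <;> omega

/-- pairing map on Fin n for n even -/
def pairFin (n : ℕ) (hn : Even n) (j : Fin n) : Fin n :=
  if h : j.val % 2 = 0 then
    ⟨j.val + 1, by
      rcases hn with ⟨k, hk⟩
      have := j.isLt
      omega⟩
  else ⟨j.val - 1, by have := j.isLt; omega⟩

lemma pairFin_val (n : ℕ) (hn : Even n) (j : Fin n) :
    (pairFin n hn j).val = if j.val % 2 = 0 then j.val + 1 else j.val - 1 := by
  unfold pairFin
  split <;> simp_all

lemma pairFin_invol (n : ℕ) (hn : Even n) (j : Fin n) :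
    pairFin n hn (pairFin n hn j) = j := by
  have h1 := pairFin_val n hn j
  have h2 := pairFin_val n hn (pairFin n hn j)
  apply Fin.ext
  rw [h2, h1]
  split <;> split <;> omega

/-- The checkerboard graph `R_{m,n}` admits a graph derangement iff `m` or `n` is even. -/
theorem checkerboard_derangement_iff (m n : ℕ) (hm : 1 ≤ m) (hn : 1 ≤ n) :
    (∃ f : Fin m × Fin n → Fin m × Fin n, Function.Injective f ∧
        ∀ v : Fin m × Fin n,
          (SimpleGraph.fromRel (fun a b : Fin m × Fin n =>
            |(a.1 : ℤ) - (b.1 : ℤ)| + |(a.2 : ℤ) - (b.2 : ℤ)| = 1)).Adj v (f v)) ↔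
      (Even m ∨ Even n) := by
  constructor
  · rintro ⟨f, hf, hadj⟩
    by_contra hpar
    push_neg at hpar
    obtain ⟨hmodd, hnodd⟩ := hpar
    -- parity argument
    have key : ∀ v : Fin m × Fin n, (v.1.val + v.2.val) % 2 ≠ ((f v).1.val + (f v).2.val) % 2 := by
      intro v
      have h := hadj v
      rw [SimpleGraph.fromRel_adj] at h
      obtain ⟨-, h | h⟩ := h
      · have := odd_of_abs_add_abs _ _ h
        obtain ⟨k, hk⟩ := this
        push_cast at hk
        omega
      · have := odd_of_abs_add_abs _ _ h
        obtain ⟨k, hk⟩ := this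
        push_cast at hk
        omega
    classical
    set S : Finset (Fin m × Fin n) := Finset.univ.filter (fun v => (v.1.val + v.2.val) % 2 = 0) with hS
    have hsub1 : S.image f ⊆ Sᶜ := by
      intro w hw
      simp only [Finset.mem_image] at hw
      obtain ⟨v, hv, rfl⟩ := hw
      simp only [hS, Finset.mem_filter, Finset.mem_univ, true_and] at hv
      simp only [hS, Finset.mem_compl, Finset.mem_filter, Finset.mem_univ, true_and]
      have := key v
      omega
    have hsub2 : Sᶜ.image f ⊆ S := by
      intro w hw
      simp only [Finset.mem_image] at hw
      obtain ⟨v, hv, rfl⟩ := hw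
      simp only [hS, Finset.mem_compl, Finset.mem_filter, Finset.mem_univ, true_and] at hv
      simp only [hS, Finset.mem_filter, Finset.mem_univ, true_and]
      have := key v
      omega
    have c1 : S.card ≤ Sᶜ.card := by
      calc S.card = (S.image f).card := (Finset.card_image_of_injective S hf).symm
        _ ≤ Sᶜ.card := Finset.card_le_card hsub1
    have c2 : Sᶜ.card ≤ S.card := by
      calc Sᶜ.card = (Sᶜ.image f).card := (Finset.card_image_of_injective Sᶜ hf).symm
        _ ≤ S.card := Finset.card_le_card hsub2
    have heq : S.card = Sᶜ.card := le_antisymm c1 c2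
    have htot : S.card + Sᶜ.card = m * n := by
      rw [Finset.card_add_card_compl]
      simp [Fintype.card_prod]
    have hodd : Odd (m * n) := Nat.odd_mul.mpr
      ⟨Nat.odd_iff.mpr (Nat.not_even_iff.mp hmodd), Nat.odd_iff.mpr (Nat.not_even_iff.mp hnodd)⟩
    obtain ⟨c, hc⟩ := hodd
    omega
  · rintro (he | he)
    · refine ⟨fun v => (pairFin m he v.1, v.2), ?_, ?_⟩
      · intro a b hab
        simp only [Prod.mk.injEq] at hab
        obtain ⟨h1, h2⟩ := hab
        have := congrArg (pairFin m he) h1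
        rw [pairFin_invol, pairFin_invol] at this
        exact Prod.ext this h2
      · intro v
        rw [SimpleGraph.fromRel_adj]
        have hv := pairFin_val m he v.1
        constructor
        · intro hc
          have := congrArg (fun p => p.1.val) hc
          simp at this
          rw [hv] at this
          split at this <;> omega
        · left
          simp only
          have hlt := v.1.isLt
          rw [hv]
          split <;> rename_i h
          · push_cast
            rw [sub_self, abs_zero] at *
            rw [show ((v.1.val : ℤ) - (v.1.val + 1)) = -1 by ring]
            simp
          · have h1 : 1 ≤ v.1.val := by omega
            rw [Nat.cast_sub h1]
            push_cast
            rw [show ((v.2.1:ℤ) - v.2.1) = 0 by ring, abs_zero,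
              show ((v.1.val : ℤ) - (v.1.val - 1)) = 1 by ring]
            simp
    · refine ⟨fun v => (v.1, pairFin n he v.2), ?_, ?_⟩
      · intro a b hab
        simp only [Prod.mk.injEq] at hab
        obtain ⟨h1, h2⟩ := hab
        have := congrArg (pairFin n he) h2
        rw [pairFin_invol, pairFin_invol] at this
        exact Prod.ext h1 this
      · intro v
        rw [SimpleGraph.fromRel_adj]
        have hv := pairFin_val n he v.2
        constructor
        · intro hc
          have := congrArg (fun p => p.2.val) hc
          simp at this
          rw [hv] at this
          split at this <;> omega
        · left
          simp only
          have hlt := v.2.isLt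
          rw [hv]
          split <;> rename_i h
          · push_cast
            rw [show ((v.1.1:ℤ) - v.1.1) = 0 by ring, abs_zero,
              show ((v.2.val : ℤ) - (v.2.val + 1)) = -1 by ring]
            simp
          · have h1 : 1 ≤ v.2.val := by omega
            rw [Nat.cast_sub h1]
            push_cast
            rw [show ((v.1.1:ℤ) - v.1.1) = 0 by ring, abs_zero,
              show ((v.2.val : ℤ) - (v.2.val - 1)) = 1 by ring]
            simp
end
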